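/- 𝔵_{<,≤} = 𝔵_{<,<} = max{𝔰, 𝔟}. -/

import Mathlib

open Cardinal Set

open Cardinal Set

/-- `A` is almost contained in `B`: `A \ B` is finite. -/
def ASub (A B : Set ℕ) : Prop := (A \ B).Finite

/-- A family is linearly quasiordered by `⊆*`. -/
def LinQO (F : Set (Set ℕ)) : Prop := ∀ A ∈ F, ∀ B ∈ F, ASub A B ∨ ASub B A

/-- A centered family of infinite subsets of `ℕ`. -/
def Centered (F : Set (Set ℕ)) : Prop :=
  (∀ A ∈ F, A.Infinite) ∧
  ∀ G : Finset (Set ℕ), ↑G ⊆ F → G.Nonempty → (⋂ A ∈ G, A).Infinite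

/-- `A` is a pseudo-intersection of `F`. -/
def PseudoInt (F : Set (Set ℕ)) (A : Set ℕ) : Prop :=
  A.Infinite ∧ ∀ B ∈ F, ASub A B

/-- The pseudo-intersection number 𝔭. -/
noncomputable def pNum : Cardinal :=
  sInf {c | ∃ F : Set (Set ℕ), Centered F ∧ (¬∃ A, PseudoInt F A) ∧ c = #F}

/-- The tower number 𝔱. -/
noncomputable def tNum : Cardinal :=
  sInf {c | ∃ F : Set (Set ℕ), (∀ A ∈ F, A.Infinite) ∧ LinQO F ∧
    (¬∃ A, PseudoInt F A) ∧ c = #F}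

/-- Eventual dominance `f ≤* g`. -/
def LeStar (f g : ℕ → ℕ) : Prop := {n | g n < f n}.Finite

def UnboundedFam (B : Set (ℕ → ℕ)) : Prop := ¬∃ g, ∀ f ∈ B, LeStar f g

def DominatingFam (D : Set (ℕ → ℕ)) : Prop := ∀ f, ∃ g ∈ D, LeStar f g

/-- The unbounding number 𝔟. -/
noncomputable def bNum : Cardinal := sInf {c | ∃ B, UnboundedFam B ∧ c = #B}

/-- The dominating number 𝔡. -/
noncomputable def dNum : Cardinal := sInf {c | ∃ D, DominatingFam D ∧ c = #D}

def SplittingFam (S : Set (Set ℕ)) : Prop :=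
  ∀ A : Set ℕ, A.Infinite → ∃ s ∈ S, (A ∩ s).Infinite ∧ (A \ s).Infinite

/-- The splitting number 𝔰. -/
noncomputable def sNum : Cardinal := sInf {c | ∃ S, SplittingFam S ∧ c = #S}

/-- `g` avoids middles in `X` with respect to `⟨R,S⟩`. -/
def AvoidsMiddles (R S : ℕ → ℕ → Prop) (g : ℕ → ℕ) (X : Set (ℕ → ℕ)) : Prop :=
  (∀ f ∈ X, {n | R (f n) (g n)}.Infinite) ∧
  ∀ f ∈ X, ∀ h ∈ X,
    {n | R (f n) (g n) ∧ S (g n) (h n)}.Finite ∨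
    {n | R (h n) (g n) ∧ S (g n) (f n)}.Finite

/-- The excluded middle property with respect to `⟨R,S⟩`. -/
def EMP (R S : ℕ → ℕ → Prop) (X : Set (ℕ → ℕ)) : Prop := ∃ g, AvoidsMiddles R S g X

/-- The cardinal 𝔵_{R,S}. -/
noncomputable def xNum (R S : ℕ → ℕ → Prop) : Cardinal :=
  sInf {c | ∃ X : Set (ℕ → ℕ), ¬ EMP R S X ∧ c = #X}

/-- The class 𝔅 of bounded sets. -/
def ClB (Y : Set (ℕ → ℕ)) : Prop := ∃ g, ∀ f ∈ Y, LeStar f g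

/-- The class 𝔛. -/
def ClX (Y : Set (ℕ → ℕ)) : Prop := EMP (· < ·) (· ≤ ·) Y

/-- `Y` is finitely dominating: `maxfin Y` is dominating. -/
def FinDominating (Y : Set (ℕ → ℕ)) : Prop :=
  ∀ f : ℕ → ℕ, ∃ F : Finset (ℕ → ℕ), ↑F ⊆ Y ∧ LeStar f (fun n => F.sup (fun h => h n))

/-- The class 𝔇fin of non finitely-dominating sets. -/
def ClDfin (Y : Set (ℕ → ℕ)) : Prop := ¬ FinDominating Y

/-- The class 𝔇 of non-dominating sets. -/
def ClD (Y : Set (ℕ → ℕ)) : Prop := ¬ DominatingFam Y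

/-- The additivity number add(I, J). -/
noncomputable def addNum (I J : Set (ℕ → ℕ) → Prop) : Cardinal :=
  sInf {c | ∃ Fam : Set (Set (ℕ → ℕ)), (∀ Y ∈ Fam, I Y) ∧ ¬ J (⋃₀ Fam) ∧ c = #Fam}

/-- The Boolean subalgebra of `P(ℕ)` generated by `F`. -/
def genBA (F : Set (Set ℕ)) : Set (Set ℕ) :=
  ⋂₀ {C | F ⊆ C ∧ Set.univ ∈ C ∧ (∀ A ∈ C, Aᶜ ∈ C) ∧ ∀ A ∈ C, ∀ B ∈ C, A ∩ B ∈ C}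

/-- A nonprincipal ultrafilter (every member is infinite). -/
def NonPrincipal (U : Ultrafilter ℕ) : Prop := ∀ S ∈ U, Set.Infinite S

/-- The cofinality of the reduced product `ℕ^ℕ/U`. -/
noncomputable def cofRP (U : Ultrafilter ℕ) : Cardinal :=
  sInf {c | ∃ C : Set (ℕ → ℕ), (∀ f : ℕ → ℕ, ∃ g ∈ C, {n | f n ≤ g n} ∈ U) ∧ c = #C}



lemma bddBelow_card (s : Set Cardinal) : BddBelow s := ⟨0, fun c _ => (zero_le : (0 : Cardinal) ≤ c)⟩

lemma list_unsplit (l : List (Set ℕ)) (A : Set ℕ) (hA : A.Infinite) :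
    ∃ B ⊆ A, B.Infinite ∧ ∀ s ∈ l, ¬((B ∩ s).Infinite ∧ (B \ s).Infinite) := by
  induction l generalizing A with
  | nil => exact ⟨A, subset_rfl, hA, by simp⟩
  | cons s l ih =>
    obtain ⟨B, hBA, hBinf, hB⟩ := ih A hA
    by_cases h : (B ∩ s).Infinite
    · refine ⟨B ∩ s, inter_subset_left.trans hBA, h, ?_⟩
      intro t ht
      rcases List.mem_cons.1 ht with rfl | ht
      · rintro ⟨-, h2⟩
        exact h2 (Set.finite_empty.subset (fun n hn => (hn.2 hn.1.2).elim))
      · rintro ⟨h1, h2⟩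
        exact hB t ht ⟨h1.mono (by intro n hn; exact ⟨hn.1.1, hn.2⟩),
          h2.mono (by intro n hn; exact ⟨hn.1.1, hn.2⟩)⟩
    · rw [Set.not_infinite] at h
      have hdiff : (B \ s).Infinite := by
        have := hBinf.diff h
        rwa [Set.diff_self_inter] at this
      refine ⟨B \ s, diff_subset.trans hBA, hdiff, ?_⟩
      intro t ht
      rcases List.mem_cons.1 ht with rfl | ht
      · rintro ⟨h1, -⟩
        exact h1 (Set.finite_empty.subset (fun n hn => (hn.1.2 hn.2).elim))
      · rintro ⟨h1, h2⟩
        exact hB t ht ⟨h1.mono (by intro n hn; exact ⟨hn.1.1, hn.2⟩),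
          h2.mono (by intro n hn; exact ⟨hn.1.1, hn.2⟩)⟩

lemma not_splitting_of_finite {S : Set (Set ℕ)} (h : S.Finite) : ¬ SplittingFam S := by
  intro hS
  obtain ⟨B, -, hBinf, hB⟩ := list_unsplit h.toFinset.toList univ Set.infinite_univ
  obtain ⟨s, hsS, h1, h2⟩ := hS B hBinf
  exact hB s (by simpa using (h.mem_toFinset (a := s)).2 hsS) ⟨h1, h2⟩

lemma splitting_univ : SplittingFam (Set.univ : Set (Set ℕ)) := by
  intro A hA
  set emb := hA.natEmbedding
  have hinj : Function.Injective (fun k => (emb k : ℕ)) :=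
    fun a b h => emb.injective (Subtype.coe_injective h)
  refine ⟨Set.range (fun k => (emb (2*k) : ℕ)), Set.mem_univ _, ?_, ?_⟩
  · refine Set.Infinite.mono ?_ (Set.infinite_range_of_injective (f := fun k => (emb (2*k) : ℕ))
      (fun a b h => by have := hinj h; omega))
    rintro n ⟨k, rfl⟩
    exact ⟨(emb (2*k)).2, ⟨k, rfl⟩⟩
  · refine Set.Infinite.mono ?_ (Set.infinite_range_of_injective (f := fun k => (emb (2*k+1) : ℕ))
      (fun a b h => by have := hinj h; omega))
    rintro n ⟨k, rfl⟩
    refine ⟨(emb (2*k+1)).2, ?_⟩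
    rintro ⟨j, hj⟩
    have := hinj hj
    omega

lemma aleph0_le_sNum : ℵ₀ ≤ sNum := by
  refine le_csInf ⟨#(Set.univ : Set (Set ℕ)), Set.univ, splitting_univ, rfl⟩ ?_
  rintro c ⟨S, hS, rfl⟩
  by_contra h
  push_neg at h
  exact not_splitting_of_finite (Cardinal.lt_aleph0_iff_set_finite.1 h) hS

lemma unbounded_univ : UnboundedFam (Set.univ : Set (ℕ → ℕ)) := by
  rintro ⟨g, hg⟩
  have h := hg (fun n => g n + 1) (Set.mem_univ _)
  exact Set.infinite_univ (α := ℕ) (h.subset (fun n _ => Nat.lt_succ_self _))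

lemma bounded_of_finite {B : Set (ℕ → ℕ)} (h : B.Finite) : ∃ g, ∀ f ∈ B, LeStar f g := by
  refine ⟨fun n => h.toFinset.sup (fun f => f n), ?_⟩
  intro f hf
  have : {n | h.toFinset.sup (fun f => f n) < f n} = ∅ := by
    ext n
    simp only [mem_setOf_eq, mem_empty_iff_false, iff_false, not_lt]
    exact Finset.le_sup (s := h.toFinset) (f := fun f' : ℕ → ℕ => f' n) (h.mem_toFinset.2 hf)
  rw [LeStar, this]
  exact Set.finite_empty

lemma aleph0_le_bNum : ℵ₀ ≤ bNum := by
  refine le_csInf ⟨#(Set.univ : Set (ℕ → ℕ)), Set.univ, unbounded_univ, rfl⟩ ?_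
  rintro c ⟨B, hB, rfl⟩
  by_contra h
  push_neg at h
  exact hB (bounded_of_finite (Cardinal.lt_aleph0_iff_set_finite.1 h))

lemma dominating_univ : DominatingFam (Set.univ : Set (ℕ → ℕ)) := by
  intro f
  refine ⟨f, Set.mem_univ _, ?_⟩
  exact Set.finite_empty.subset (fun n hn => absurd (show f n < f n from hn) (lt_irrefl (f n)))

/-! ### s ≤ d -/

noncomputable def idxf (f : ℕ → ℕ) (n : ℕ) : ℕ := Nat.findGreatest (fun k => f^[k] 0 ≤ n) n

lemma iter_succ_eq (f : ℕ → ℕ) (k : ℕ) : f^[k+1] 0 = f (f^[k] 0) :=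
  Function.iterate_succ_apply' f k 0

lemma iter_strictMono {f : ℕ → ℕ} (hf0 : ∀ n, n < f n) : StrictMono (fun k => f^[k] 0) := by
  apply strictMono_nat_of_lt_succ
  intro k
  rw [iter_succ_eq]
  exact hf0 _

lemma le_iter {f : ℕ → ℕ} (hf0 : ∀ n, n < f n) (k : ℕ) : k ≤ f^[k] 0 :=
  (iter_strictMono hf0).le_apply

lemma idxf_spec1 (f : ℕ → ℕ) (n : ℕ) : f^[idxf f n] 0 ≤ n :=
  Nat.findGreatest_spec (P := fun k => f^[k] 0 ≤ n) (Nat.zero_le n) (by simp)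

lemma idxf_spec2 {f : ℕ → ℕ} (hf0 : ∀ n, n < f n) (n : ℕ) : n < f^[idxf f n + 1] 0 := by
  by_contra h
  push_neg at h
  have h1 : idxf f n + 1 ≤ n := le_trans (le_iter hf0 _) h
  have := Nat.le_findGreatest (P := fun k => f^[k] 0 ≤ n) h1 h
  unfold idxf at this
  omega

lemma idxf_eq {f : ℕ → ℕ} (hf0 : ∀ n, n < f n) {k n : ℕ}
    (h1 : f^[k] 0 ≤ n) (h2 : n < f^[k+1] 0) : idxf f n = k := by
  have hk : k ≤ idxf f n :=
    Nat.le_findGreatest (le_trans (le_iter hf0 k) h1) h1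
  rcases Nat.lt_or_ge k (idxf f n) with h | h
  · exfalso
    have : f^[k+1] 0 ≤ f^[idxf f n] 0 := ((iter_strictMono hf0).le_iff_le).2 h
    have := idxf_spec1 f n
    omega
  · omega

/-- next element of A strictly above n -/
noncomputable def nxt (A : Set ℕ) (n : ℕ) : ℕ := sInf {a | a ∈ A ∧ n < a}

lemma nxt_spec {A : Set ℕ} (hA : A.Infinite) (n : ℕ) : nxt A n ∈ A ∧ n < nxt A n := by
  have hne : {a | a ∈ A ∧ n < a}.Nonempty := by
    obtain ⟨b, hb, hbn⟩ := hA.exists_gt n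
    exact ⟨b, hb, hbn⟩
  exact Nat.sInf_mem hne

lemma nxt_le {A : Set ℕ} {n a : ℕ} (ha : a ∈ A) (h : n < a) : nxt A n ≤ a :=
  Nat.sInf_le ⟨ha, h⟩

lemma reach {A : Set ℕ} (hA : A.Infinite) {a₀ b : ℕ} (ha₀ : a₀ ∈ A) (hb : b ∈ A)
    (hlt : a₀ < b) : ∃ a ∈ A, a₀ ≤ a ∧ a < b ∧ nxt A a = b := by
  classical
  set a := Nat.findGreatest (fun m => m ∈ A ∧ a₀ ≤ m) (b-1) with ha
  have hspec : a ∈ A ∧ a₀ ≤ a := by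
    rw [ha]
    exact Nat.findGreatest_spec (P := fun m => m ∈ A ∧ a₀ ≤ m) (m := a₀) (by omega) ⟨ha₀, le_rfl⟩
  have hle : a ≤ b - 1 := Nat.findGreatest_le _
  have hab : a < b := by omega
  have h1 : nxt A a ≤ b := nxt_le hb hab
  have h2 := nxt_spec hA a
  refine ⟨a, hspec.1, hspec.2, hab, ?_⟩
  rcases Nat.lt_or_ge (nxt A a) b with h | h
  · exfalso
    have hP : nxt A a ∈ A ∧ a₀ ≤ nxt A a := ⟨h2.1, le_trans hspec.2 (le_of_lt h2.2)⟩
    have := Nat.le_findGreatest (P := fun m => m ∈ A ∧ a₀ ≤ m) (n := b - 1) (by omega) hP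
    rw [← ha] at this
    omega
  · omega

lemma no_tail_parity {f : ℕ → ℕ} {A : Set ℕ} {N : ℕ}
    (hf : StrictMono f) (hf0 : ∀ n, n < f n) (hA : A.Infinite)
    (hdom : ∀ n, N ≤ n → nxt A n ≤ f n) (Q : ℕ → Prop)
    (halt : ∀ k, Q k → ¬ Q (k+1))
    (hQ : ∀ a ∈ A, N ≤ a → Q (idxf f a)) : False := by
  obtain ⟨a₀, ha₀A, ha₀⟩ := hA.exists_gt N
  set k := idxf f a₀ with hk
  have key : ∀ b, b ∈ A → a₀ ≤ b → b < f^[k+1] 0 := by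
    intro b
    induction b using Nat.strong_induction_on with
    | _ b IH =>
      intro hbA hab
      rcases eq_or_lt_of_le hab with rfl | hlt'
      · exact idxf_spec2 hf0 _
      · obtain ⟨a, haA, ha₀a, hab', hnxt⟩ := reach hA ha₀A hbA hlt'
        have hb1 : a < f^[k+1] 0 := IH a hab' haA ha₀a
        have hidxa : idxf f a = k :=
          idxf_eq hf0 (le_trans (hk ▸ idxf_spec1 f a₀) ha₀a) hb1
        have hbf : b ≤ f a := hnxt ▸ hdom a (by omega)
        have hbk2 : b < f^[k+2] 0 := by
          have : f a < f^[k+2] 0 := by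
            rw [show k+2 = (k+1)+1 from rfl, iter_succ_eq]
            exact hf hb1
          omega
        by_contra hge
        push_neg at hge
        have hidxb : idxf f b = k + 1 := idxf_eq hf0 hge hbk2
        exact halt k (hQ a₀ ha₀A (le_of_lt ha₀))
          (hidxb ▸ hQ b hbA (by omega))
  have hsub : A ⊆ Set.Iio (max a₀ (f^[k+1] 0)) := by
    intro b hb
    simp only [Set.mem_Iio, lt_max_iff]
    rcases Nat.lt_or_ge b a₀ with h | h
    · exact Or.inl h
    · exact Or.inr (key b hb h)
  exact hA ((Set.finite_Iio _).subset hsub)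

lemma sNum_le_dNum : sNum ≤ dNum := by
  have hne : {c | ∃ D, DominatingFam D ∧ c = #D}.Nonempty :=
    ⟨#(Set.univ : Set (ℕ → ℕ)), Set.univ, dominating_univ, rfl⟩
  obtain ⟨D, hD, hcard⟩ := csInf_mem hne
  set Nf : (ℕ → ℕ) → (ℕ → ℕ) := fun f n => n + 1 + (Finset.range (n+1)).sup f with hNf
  have hmono : ∀ f, StrictMono (Nf f) := by
    intro f a b h
    have : (Finset.range (a+1)).sup f ≤ (Finset.range (b+1)).sup f :=
      Finset.sup_mono (Finset.range_subset_range.2 (by omega))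
    simp only [hNf]
    omega
  have hgt : ∀ f n, n < Nf f n := by intro f n; simp only [hNf]; omega
  have hge : ∀ f n, f n ≤ Nf f n := by
    intro f n
    have : f n ≤ (Finset.range (n+1)).sup f :=
      Finset.le_sup (Finset.mem_range.2 (Nat.lt_succ_self n))
    simp only [hNf]
    omega
  set SS : Set (Set ℕ) := (fun f => {n | Even (idxf f n)}) '' (Nf '' D) with hSS
  have hsplit : SplittingFam SS := by
    intro A hA
    obtain ⟨f0, hf0D, hle⟩ := hD (fun n => nxt A n)
    set f := Nf f0 with hf
    have hdomfin : {n | f n < nxt A n}.Finite :=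
      hle.subset (fun n hn => lt_of_le_of_lt (hge f0 n) hn)
    obtain ⟨N0, hN0⟩ := hdomfin.bddAbove
    have hdom : ∀ n, N0 + 1 ≤ n → nxt A n ≤ f n := by
      intro n hn
      by_contra hc
      push_neg at hc
      have := hN0 (show n ∈ {n | f n < nxt A n} from hc)
      omega
    refine ⟨{n | Even (idxf f n)}, ⟨f, ⟨f0, hf0D, rfl⟩, rfl⟩, ?_, ?_⟩
    · by_contra h
      rw [Set.not_infinite] at h
      obtain ⟨M, hM⟩ := h.bddAbove
      refine no_tail_parity (hmono f0) (hgt f0) hA (N := max (N0+1) (M+1))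
        (fun n hn => hdom n (le_trans (le_max_left _ _) hn)) Odd ?_ ?_
      · intro k hk h1
        have : Even (k+1) := Nat.even_add_one.2 (Nat.not_even_iff_odd.2 hk)
        exact (Nat.not_even_iff_odd.2 h1) this
      · intro a haA hNa
        rw [← Nat.not_even_iff_odd]
        intro heven
        have : a ∈ A ∩ {n | Even (idxf f n)} := ⟨haA, heven⟩
        have := hM this
        omega
    · by_contra h
      rw [Set.not_infinite] at h
      obtain ⟨M, hM⟩ := h.bddAbove
      refine no_tail_parity (hmono f0) (hgt f0) hA (N := max (N0+1) (M+1))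
        (fun n hn => hdom n (le_trans (le_max_left _ _) hn)) Even ?_ ?_
      · intro k hk h1
        exact (Nat.even_add_one.1 h1) hk
      · intro a haA hNa
        by_contra hodd
        have : a ∈ A \ {n | Even (idxf f n)} := ⟨haA, hodd⟩
        have := hM this
        omega
  have h1 : sNum ≤ #SS := csInf_le (bddBelow_card _) ⟨SS, hsplit, rfl⟩
  have h2 : #SS ≤ #D := le_trans Cardinal.mk_image_le Cardinal.mk_image_le
  unfold dNum
  rw [hcard]
  exact le_trans h1 h2

lemma bNum_le {B : Set (ℕ → ℕ)} (h : UnboundedFam B) : bNum ≤ #B := by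
  unfold bNum; exact csInf_le (bddBelow_card _) ⟨B, h, rfl⟩

lemma sNum_le {S : Set (Set ℕ)} (h : SplittingFam S) : sNum ≤ #S := by
  unfold sNum; exact csInf_le (bddBelow_card _) ⟨S, h, rfl⟩

lemma dNum_le {D : Set (ℕ → ℕ)} (h : DominatingFam D) : dNum ≤ #D := by
  unfold dNum; exact csInf_le (bddBelow_card _) ⟨D, h, rfl⟩

/-! ### lower bounds -/

lemma lowerB {X : Set (ℕ → ℕ)} (hX : ¬ EMP (· < ·) (· ≤ ·) X) : bNum ≤ #X := by
  by_contra h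
  push_neg at h
  have hub : ¬ UnboundedFam X := fun hu =>
    absurd (bNum_le hu) (not_le.2 h)
  rw [UnboundedFam, not_not] at hub
  obtain ⟨g, hg⟩ := hub
  apply hX
  unfold EMP AvoidsMiddles
  refine ⟨fun n => g n + 1, ?_, ?_⟩
  · intro f hf
    have hfin := hg f hf
    have hsub : {n | f n < g n + 1}ᶜ ⊆ {n | g n < f n} := by
      intro n hn
      simp only [Set.mem_compl_iff, Set.mem_setOf_eq, not_lt] at hn ⊢
      omega
    have : ({n | f n < g n + 1}ᶜ).Finite := hfin.subset hsub
    simpa using this.infinite_compl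
  · intro f _ h' hh'
    left
    have hfin := hg h' hh'
    apply hfin.subset
    rintro n ⟨-, h2⟩
    have h2' : g n + 1 ≤ h' n := h2
    simp only [Set.mem_setOf_eq]
    omega

lemma lowerS {X : Set (ℕ → ℕ)} (hX : ¬ EMP (· < ·) (· ≤ ·) X) : sNum ≤ #X := by
  by_contra hlt
  push_neg at hlt
  have hXX : #X * #X < sNum := by
    rcases lt_or_ge (#X) ℵ₀ with h | h
    · exact lt_of_lt_of_le (Cardinal.mul_lt_aleph0 h h) aleph0_le_sNum
    · rwa [Cardinal.mul_eq_self h]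
  set Df : Set (Set ℕ) := (fun p : (ℕ → ℕ) × (ℕ → ℕ) => {n | p.1 n ≤ p.2 n}) '' (X ×ˢ X)
    with hDf
  have hDcard : #Df < sNum :=
    lt_of_le_of_lt (le_trans Cardinal.mk_image_le (le_of_eq (Cardinal.mk_setProd _ _))) hXX
  have hnsplit : ¬ SplittingFam Df := fun hs =>
    absurd (sNum_le hs) (not_le.2 hDcard)
  rw [SplittingFam] at hnsplit
  push_neg at hnsplit
  obtain ⟨A, hA, hunsplit⟩ := hnsplit
  have hg : ∃ g : ℕ → ℕ, ∀ f ∈ X, {n | n ∈ A ∧ f n < g n}.Infinite := by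
    by_contra hng
    push_neg at hng
    classical
    set emb := hA.natEmbedding with hemb
    have hinj : Function.Injective (fun k => (emb k : ℕ)) :=
      fun a b h => emb.injective (Subtype.coe_injective h)
    set De : Set (ℕ → ℕ) := (fun f => fun k => f (emb k)) '' X with hDe
    have hdom : DominatingFam De := by
      intro u
      set gg : ℕ → ℕ := fun n => if h : ∃ k, (emb k : ℕ) = n then u h.choose + 1 else 0
        with hgg
      obtain ⟨f, hfX, hfin⟩ := hng gg
      refine ⟨fun k => f (emb k), ⟨f, hfX, rfl⟩, ?_⟩
      have hsub : {k | f (emb k) < u k} ⊆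
          (fun k => (emb k : ℕ)) ⁻¹' {n | n ∈ A ∧ f n < gg n} := by
        intro k hk
        have h1 : ∃ j, (emb j : ℕ) = (emb k : ℕ) := ⟨k, rfl⟩
        have h2 : h1.choose = k := hinj h1.choose_spec
        refine ⟨(emb k).2, ?_⟩
        simp only [hgg, dif_pos h1, h2]
        exact Nat.lt_succ_of_lt hk
      exact (hfin.preimage hinj.injOn).subset hsub
    have hd1 : dNum ≤ #De := dNum_le hdom
    have hd2 : dNum ≤ #X := le_trans hd1 Cardinal.mk_image_le
    exact absurd (lt_of_lt_of_le hlt sNum_le_dNum) (not_lt.2 hd2)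
  obtain ⟨g, hg⟩ := hg
  apply hX
  classical
  unfold EMP AvoidsMiddles
  refine ⟨fun n => if n ∈ A then g n else 0, ?_, ?_⟩
  · intro f hf
    apply (hg f hf).mono
    rintro n ⟨hnA, hlt'⟩
    simp only [Set.mem_setOf_eq, if_pos hnA]
    exact hlt'
  · intro f hf h hh
    have hsD : {n | f n ≤ h n} ∈ Df := ⟨(f, h), ⟨hf, hh⟩, rfl⟩
    have hd := hunsplit _ hsD
    by_cases hc : (A ∩ {n | f n ≤ h n}).Infinite
    · right
      have h2 : (A \ {n | f n ≤ h n}).Finite := by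
        rw [← Set.not_infinite]
        exact Set.not_infinite.2 (hd hc)
      apply h2.subset
      rintro n ⟨hh1, hh2⟩
      simp only [Set.mem_setOf_eq] at hh1 hh2
      by_cases hnA : n ∈ A
      · rw [if_pos hnA] at hh1 hh2
        exact ⟨hnA, by simp only [Set.mem_setOf_eq]; omega⟩
      · rw [if_neg hnA] at hh1
        omega
    · left
      rw [Set.not_infinite] at hc
      apply hc.subset
      rintro n ⟨hh1, hh2⟩
      simp only [Set.mem_setOf_eq] at hh1 hh2
      by_cases hnA : n ∈ A
      · rw [if_pos hnA] at hh1 hh2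
        exact ⟨hnA, by simp only [Set.mem_setOf_eq]; omega⟩
      · rw [if_neg hnA] at hh1
        omega

/-! ### upper bound -/

lemma upper : ∃ X : Set (ℕ → ℕ), ¬ EMP (· < ·) (· < ·) X ∧ #X ≤ max sNum bNum := by
  classical
  have hBne : {c | ∃ B, UnboundedFam B ∧ c = #B}.Nonempty :=
    ⟨#(Set.univ : Set (ℕ → ℕ)), Set.univ, unbounded_univ, rfl⟩
  obtain ⟨B, hB, hBc⟩ := csInf_mem hBne
  have hSne : {c | ∃ S, SplittingFam S ∧ c = #S}.Nonempty :=
    ⟨#(Set.univ : Set (Set ℕ)), Set.univ, splitting_univ, rfl⟩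
  obtain ⟨S, hS, hSc⟩ := csInf_mem hSne
  set M : (ℕ → ℕ) → (ℕ → ℕ) := fun b n => (Finset.range (n+1)).sup b with hM
  have hmono : ∀ b, Monotone (M b) := by
    intro b a c h
    exact Finset.sup_mono (Finset.range_subset_range.2 (by omega))
  have hble : ∀ b n, b n ≤ M b n := fun b n =>
    Finset.le_sup (Finset.mem_range.2 (Nat.lt_succ_self n))
  set T : Set (Set ℕ) := S ∪ compl '' S with hT
  set F : (ℕ → ℕ) × Set ℕ → (ℕ → ℕ) :=
    fun p => fun n => if n ∈ p.2 then p.1 n else 0 with hF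
  have hFval : ∀ (b : ℕ → ℕ) (t : Set ℕ) (n : ℕ) (hn : n ∈ t), F (b, t) n = b n := by
    intro b t n hn
    simp only [hF, if_pos hn]
  have hFval' : ∀ (b : ℕ → ℕ) (t : Set ℕ) (n : ℕ) (hn : n ∉ t), F (b, t) n = 0 := by
    intro b t n hn
    simp only [hF, if_neg hn]
  set X : Set (ℕ → ℕ) := insert (fun _ => 0) (F '' ((M '' B) ×ˢ T)) with hX
  refine ⟨X, ?_, ?_⟩
  · rintro ⟨g, hg1, hg2⟩
    have hA1 : {n | 0 < g n}.Infinite := by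
      have := hg1 (fun _ => 0) (Set.mem_insert _ _)
      exact this.mono (fun n hn => hn)
    set A1 := {n | 0 < g n} with hA1def
    have hnx : ∀ n, nxt A1 n ∈ A1 ∧ n < nxt A1 n := nxt_spec hA1
    have hub : ¬ ∀ b ∈ B, LeStar b (fun n => g (nxt A1 n)) := fun hall => hB ⟨_, hall⟩
    push_neg at hub
    obtain ⟨b, hbB, hnb⟩ := hub
    have hE : {n | g (nxt A1 n) < b n}.Infinite := hnb
    set b' := M b with hb'
    have hE' : {n | g (nxt A1 n) < b' n}.Infinite :=
      hE.mono (fun n hn => lt_of_lt_of_le hn (hble b n))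
    set A2 := {a | a ∈ A1 ∧ g a < b' a} with hA2def
    have hA2 : A2.Infinite := by
      apply Set.infinite_of_forall_exists_gt
      intro c
      obtain ⟨n, hn, hcn⟩ := hE'.exists_gt c
      refine ⟨nxt A1 n, ⟨(hnx n).1, ?_⟩, lt_trans hcn (hnx n).2⟩
      exact lt_of_lt_of_le hn (hmono b (le_of_lt (hnx n).2))
    obtain ⟨s, hsS, hs1, hs2⟩ := hS A2 hA2
    have hfp : F (b', s) ∈ X :=
      Set.mem_insert_of_mem _ ⟨(b', s), ⟨⟨b, hbB, rfl⟩, Or.inl hsS⟩, rfl⟩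
    have hfm : F (b', sᶜ) ∈ X :=
      Set.mem_insert_of_mem _ ⟨(b', sᶜ), ⟨⟨b, hbB, rfl⟩, Or.inr ⟨s, hsS, rfl⟩⟩, rfl⟩
    have hsub1 : A2 ∩ s ⊆ {n | F (b', sᶜ) n < g n ∧ g n < F (b', s) n} := by
      rintro n ⟨⟨hnA1, hngb⟩, hns⟩
      refine ⟨?_, ?_⟩
      · rw [hFval' b' sᶜ n (by simp [hns])]
        exact hnA1
      · rw [hFval b' s n hns]
        exact hngb
    have hsub2 : A2 \ s ⊆ {n | F (b', s) n < g n ∧ g n < F (b', sᶜ) n} := by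
      rintro n ⟨⟨hnA1, hngb⟩, hns⟩
      refine ⟨?_, ?_⟩
      · rw [hFval' b' s n hns]
        exact hnA1
      · rw [hFval b' sᶜ n (by simp [hns])]
        exact hngb
    rcases hg2 (F (b', sᶜ)) hfm (F (b', s)) hfp with hfin | hfin
    · exact (hs1.mono hsub1) hfin
    · exact (hs2.mono hsub2) hfin
  · have hκ : ℵ₀ ≤ max sNum bNum := le_trans aleph0_le_sNum (le_max_left _ _)
    have h1 : #X ≤ #(F '' ((M '' B) ×ˢ T)) + 1 := by
      rw [hX]
      exact Cardinal.mk_insert_le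
    have h2 : #(F '' ((M '' B) ×ˢ T)) ≤ #(M '' B) * #T :=
      le_trans Cardinal.mk_image_le (le_of_eq (Cardinal.mk_setProd _ _))
    have h3 : #(M '' B) ≤ max sNum bNum := by
      refine le_trans Cardinal.mk_image_le ?_
      rw [← hBc]
      exact le_max_right _ _
    have h4 : #T ≤ max sNum bNum := by
      rw [hT]
      refine le_trans (Cardinal.mk_union_le _ _) ?_
      refine Cardinal.add_le_of_le hκ ?_ (le_trans Cardinal.mk_image_le ?_) <;>
        rw [← hSc] <;> exact le_max_left _ _
    have h5 : #(M '' B) * #T ≤ max sNum bNum := by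
      calc #(M '' B) * #T ≤ max sNum bNum * max sNum bNum := mul_le_mul' h3 h4
      _ = max sNum bNum := Cardinal.mul_eq_self hκ
    calc #X ≤ #(M '' B) * #T + 1 := le_trans h1 (add_le_add_left h2 1)
    _ ≤ max sNum bNum := Cardinal.add_le_of_le hκ h5 (le_trans (le_of_lt Cardinal.one_lt_aleph0) hκ)

lemma emp_weaken {Y : Set (ℕ → ℕ)} (hY : ¬ EMP (· < ·) (· < ·) Y) :
    ¬ EMP (· < ·) (· ≤ ·) Y := by
  rintro ⟨g, h1, h2⟩
  apply hY
  refine ⟨g, h1, ?_⟩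
  intro f hf h hh
  refine (h2 f hf h hh).imp (fun hfin => hfin.subset ?_) (fun hfin => hfin.subset ?_) <;>
    · rintro n ⟨ha, hb⟩
      exact ⟨ha, le_of_lt hb⟩

theorem stmt8 :
    xNum (· < ·) (· ≤ ·) = max sNum bNum ∧
    xNum (· < ·) (· < ·) = max sNum bNum := by
  obtain ⟨X, hX, hXle⟩ := upper
  have hX' : ¬ EMP (· < ·) (· ≤ ·) X := emp_weaken hX
  constructor
  · apply le_antisymm
    · refine le_trans ?_ hXle
      unfold xNum
      exact csInf_le (bddBelow_card _) ⟨X, hX', rfl⟩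
    · unfold xNum
      refine le_csInf ⟨#X, X, hX', rfl⟩ ?_
      rintro c ⟨Y, hY, rfl⟩
      exact max_le (lowerS hY) (lowerB hY)
  · apply le_antisymm
    · refine le_trans ?_ hXle
      unfold xNum
      exact csInf_le (bddBelow_card _) ⟨X, hX, rfl⟩
    · unfold xNum
      refine le_csInf ⟨#X, X, hX, rfl⟩ ?_
      rintro c ⟨Y, hY, rfl⟩
      have hY' := emp_weaken hY
      exact max_le (lowerS hY') (lowerB hY')
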